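/- Let 𝔤 be a finite-dimensional real metabelian Lie algebra with trivial centre. Then 𝔤^∞ := ⋂_{j≥1} 𝔤^j equals the derived algebra [𝔤, 𝔤], and for every Cartan subalgebra 𝔥 ⊆ 𝔤, the subalgebra 𝔥 is abelian and 𝔤 = 𝔤^∞ ∔ 𝔥 (i.e. 𝔤^∞ ∩ 𝔥 = {0} and 𝔤^∞ + 𝔥 = 𝔤 as vector spaces). -/

import Mathlib

open LieModule LieAlgebra

theorem aux8 (L : Type*) [LieRing L] [LieAlgebra ℝ L] [Module.Finite ℝ L]
    (hcenter : LieAlgebra.center ℝ L = ⊥)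
    (hmeta : ∀ x ∈ LieAlgebra.derivedSeries ℝ L 1,
      ∀ y ∈ LieAlgebra.derivedSeries ℝ L 1, ⁅x, y⁆ = 0)
    (H : LieSubalgebra ℝ L) (hH : H.IsCartanSubalgebra) :
    ((LieModule.posFittingComp ℝ H L : Submodule ℝ L)
        = (LieAlgebra.derivedSeries ℝ L 1 : Submodule ℝ L))
      ∧ (∀ x ∈ H, x ∈ LieAlgebra.derivedSeries ℝ L 1 → x = 0)
      ∧ (∀ x : L, ∃ y ∈ LieAlgebra.derivedSeries ℝ L 1, ∃ z ∈ H, x = y + z) := by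
  haveI := hH
  set 𝔞 := LieAlgebra.derivedSeries ℝ L 1 with h𝔞
  set F := LieModule.posFittingComp ℝ H L with hFdef
  have hab : ∀ a b : L, ⁅a, b⁆ ∈ 𝔞 := by
    intro a b
    rw [h𝔞]
    exact LieSubmodule.lie_mem_lie (LieSubmodule.mem_top a) (LieSubmodule.mem_top b)
  -- F ≤ 𝔞
  have hFa : (F : Submodule ℝ L) ≤ (𝔞 : Submodule ℝ L) := by
    rw [hFdef, LieModule.posFittingComp, LieSubmodule.iSup_toSubmodule]
    refine iSup_le fun x m hm => ?_
    rw [LieSubmodule.mem_toSubmodule, LieModule.mem_posFittingCompOf] at hm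
    obtain ⟨n, hn⟩ := hm 1
    rw [pow_one, LieModule.toEnd_apply_apply] at hn
    show m ∈ 𝔞
    rw [← hn, LieSubalgebra.coe_bracket_of_module]
    exact hab _ _
  -- Fitting decomposition
  have hcompl : IsCompl H.toLieSubmodule F := by
    have := LieModule.isCompl_genWeightSpace_zero_posFittingComp ℝ H L
    rwa [show genWeightSpace L (0 : ↥H → ℝ) = H.toLieSubmodule from
      LieAlgebra.rootSpace_zero_eq ℝ L H] at this
  have hdecomp : ∀ x : L, ∃ h ∈ H, ∃ f ∈ F, x = h + f := by
    intro x
    have : x ∈ H.toLieSubmodule ⊔ F := by rw [hcompl.sup_eq_top]; exact LieSubmodule.mem_top x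
    rw [LieSubmodule.mem_sup] at this
    obtain ⟨h, hh, f, hf, hx⟩ := this
    exact ⟨h, hh, f, hf, hx.symm⟩
  -- H ∩ 𝔞 is an ideal
  have hlie : ∀ (x c : L), c ∈ H → c ∈ 𝔞 → ⁅x, c⁆ ∈ H ∧ ⁅x, c⁆ ∈ 𝔞 := by
    intro x c hcH hca
    obtain ⟨h, hh, f, hf, rfl⟩ := hdecomp x
    have hf𝔞 : f ∈ 𝔞 := hFa hf
    have : ⁅h + f, c⁆ = ⁅h, c⁆ := by
      rw [add_lie, hmeta f hf𝔞 c hca, add_zero]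
    rw [this]
    exact ⟨H.lie_mem hh hcH, 𝔞.lie_mem hca⟩
  let C : LieSubmodule ℝ L L :=
    { carrier := {c | c ∈ H ∧ c ∈ 𝔞}
      add_mem' := fun ha hb => ⟨H.add_mem ha.1 hb.1, 𝔞.add_mem ha.2 hb.2⟩
      zero_mem' := ⟨H.zero_mem, 𝔞.zero_mem⟩
      smul_mem' := fun t _ ha => ⟨H.smul_mem t ha.1, 𝔞.smul_mem t ha.2⟩
      lie_mem := fun {x c} hc => hlie x c hc.1 hc.2 }
  have hCmem : ∀ c : L, c ∈ C ↔ c ∈ H ∧ c ∈ 𝔞 := fun _ => Iff.rfl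
  -- every x acts nilpotently on C
  have hnilp : ∀ x : L, IsNilpotent (LieModule.toEnd ℝ L C x) := by
    intro x
    obtain ⟨h, hh, f, hf, rfl⟩ := hdecomp x
    have hf𝔞 : f ∈ 𝔞 := hFa hf
    obtain ⟨n, hn⟩ := LieModule.isNilpotent_toEnd_of_isNilpotent ℝ H H ⟨h, hh⟩
    refine ⟨n, ?_⟩
    have key : ∀ (k : ℕ) (c : C),
        (((LieModule.toEnd ℝ L C (h + f)) ^ k) c : L)
          = (((LieModule.toEnd ℝ ↥H ↥H ⟨h, hh⟩) ^ k) ⟨(c : L), c.2.1⟩ : L) := by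
      intro k
      induction k with
      | zero => intro c; rfl
      | succ k ih =>
        intro c
        rw [pow_succ, pow_succ, Module.End.mul_apply, Module.End.mul_apply]
        have hstep : ((LieModule.toEnd ℝ L C (h + f)) c : L)
            = (((LieModule.toEnd ℝ ↥H ↥H ⟨h, hh⟩) ⟨(c : L), c.2.1⟩ : H) : L) := by
          have hL : ((LieModule.toEnd ℝ L C (h + f)) c : L) = ⁅h + f, (c : L)⁆ := rfl
          have hR : (((LieModule.toEnd ℝ ↥H ↥H ⟨h, hh⟩) ⟨(c : L), c.2.1⟩ : H) : L)
              = ⁅h, (c : L)⁆ := rfl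
          rw [hL, hR, add_lie, hmeta f hf𝔞 (c : L) c.2.2, add_zero]
        rw [ih ((LieModule.toEnd ℝ L C (h + f)) c)]
        exact congrArg _ (congrArg _ (Subtype.ext hstep))
    refine LinearMap.ext fun c => ?_
    have h0 := key n c
    rw [hn, LinearMap.zero_apply] at h0
    rw [LinearMap.zero_apply]
    exact Subtype.ext (by rw [h0]; simp)
  haveI hCnil : LieModule.IsNilpotent L C :=
    LieAlgebra.isEngelian_of_isNoetherian C hnilp
  have hC : ∀ x ∈ H, x ∈ 𝔞 → x = 0 := by
    by_contra hcon
    push_neg at hcon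
    obtain ⟨x, hxH, hx𝔞, hx0⟩ := hcon
    haveI : Nontrivial C :=
      ⟨⟨x, hxH, hx𝔞⟩, 0, fun hEq => hx0 (by simpa [Subtype.ext_iff] using hEq)⟩
    haveI := LieModule.nontrivial_max_triv_of_isNilpotent ℝ L C
    obtain ⟨z, hz⟩ := exists_ne (0 : LieModule.maxTrivSubmodule ℝ L C)
    have hzc : ((z : C) : L) ∈ LieAlgebra.center ℝ L := by
      intro y
      have := z.2 y
      have : (((⁅y, (z : C)⁆ : C)) : L) = 0 := by rw [this]; rfl
      simpa using this
    rw [hcenter] at hzc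
    apply hz
    have h1 : ((z : C) : L) = 0 := hzc
    exact Subtype.ext (Subtype.ext h1)
  -- 𝔞 ≤ F
  have haF : (𝔞 : Submodule ℝ L) ≤ (F : Submodule ℝ L) := by
    have h1 : 𝔞 = ⁅(⊤ : LieIdeal ℝ L), (⊤ : LieIdeal ℝ L)⁆ := rfl
    rw [h1, LieIdeal.toLieSubalgebra_toSubmodule, LieSubmodule.lieIdeal_oper_eq_linear_span]
    rw [Submodule.span_le]
    rintro m ⟨x, n, rfl⟩
    obtain ⟨h₁, hh₁, f₁, hf₁, hx1⟩ := hdecomp (x : L)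
    obtain ⟨h₂, hh₂, f₂, hf₂, hx2⟩ := hdecomp (n : L)
    rw [SetLike.mem_coe, LieSubmodule.mem_toSubmodule]
    rw [hx1, hx2, add_lie, lie_add, lie_add]
    have t1 : ⁅h₁, h₂⁆ = 0 := hC _ (H.lie_mem hh₁ hh₂) (hab h₁ h₂)
    have t2 : ⁅h₁, f₂⁆ ∈ F := by
      have := F.lie_mem (x := ⟨h₁, hh₁⟩) hf₂
      rwa [LieSubalgebra.coe_bracket_of_module] at this
    have t3 : ⁅f₁, h₂⁆ ∈ F := by
      rw [← lie_skew]
      refine F.neg_mem ?_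
      have := F.lie_mem (x := ⟨h₂, hh₂⟩) hf₁
      rwa [LieSubalgebra.coe_bracket_of_module] at this
    have t4 : ⁅f₁, f₂⁆ = 0 := hmeta f₁ (hFa hf₁) f₂ (hFa hf₂)
    rw [t1, t4, zero_add, add_zero]
    exact F.add_mem t2 t3
  refine ⟨le_antisymm hFa haF, hC, fun x => ?_⟩
  obtain ⟨h, hh, f, hf, hx⟩ := hdecomp x
  exact ⟨f, hFa hf, h, hh, by rw [hx, add_comm]⟩

/-- Let `𝔤` be a finite-dimensional real metabelian Lie algebra with trivial centre.
Then `𝔤^∞ := ⋂_{j≥1} 𝔤^j` equals the derived algebra `[𝔤, 𝔤]`, and every Cartan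
subalgebra `𝔥` of `𝔤` is abelian and satisfies `𝔤 = 𝔤^∞ ∔ 𝔥`. -/
theorem stmt8 (L : Type*) [LieRing L] [LieAlgebra ℝ L] [Module.Finite ℝ L]
    (hcenter : LieAlgebra.center ℝ L = ⊥)
    (hmeta : ∀ x ∈ LieAlgebra.derivedSeries ℝ L 1,
      ∀ y ∈ LieAlgebra.derivedSeries ℝ L 1, ⁅x, y⁆ = 0) :
    (⨅ k, LieModule.lowerCentralSeries ℝ L L k) = LieAlgebra.derivedSeries ℝ L 1 ∧
      ∀ H : LieSubalgebra ℝ L, H.IsCartanSubalgebra →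
        (∀ x ∈ H, ∀ y ∈ H, ⁅x, y⁆ = 0) ∧
        (∀ x, x ∈ (⨅ k, LieModule.lowerCentralSeries ℝ L L k) → x ∈ H → x = 0) ∧
        (∀ x : L, ∃ y ∈ (⨅ k, LieModule.lowerCentralSeries ℝ L L k), ∃ z ∈ H, x = y + z) := by
  have hab : ∀ a b : L, ⁅a, b⁆ ∈ LieAlgebra.derivedSeries ℝ L 1 := fun a b =>
    LieSubmodule.lie_mem_lie (LieSubmodule.mem_top a) (LieSubmodule.mem_top b)
  obtain ⟨x₀, hx₀⟩ := LieAlgebra.exists_isCartanSubalgebra_engel (K := ℝ) (L := L)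
  obtain ⟨hF0, -, -⟩ := aux8 L hcenter hmeta _ hx₀
  -- 𝔞 ≤ ⁅⊤, 𝔞⁆
  have hkey : LieAlgebra.derivedSeries ℝ L 1 ≤
      ⁅(⊤ : LieIdeal ℝ L), LieAlgebra.derivedSeries ℝ L 1⁆ := by
    intro m hm
    have hm' : m ∈ (LieAlgebra.derivedSeries ℝ L 1 : Submodule ℝ L) := hm
    rw [← hF0, LieModule.posFittingComp, LieSubmodule.iSup_toSubmodule] at hm'
    have hsup : (⨆ i : ↥(LieSubalgebra.engel ℝ x₀),
        ((LieModule.posFittingCompOf ℝ L i) : Submodule ℝ L)) ≤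
        ((⁅(⊤ : LieIdeal ℝ L), LieAlgebra.derivedSeries ℝ L 1⁆ : LieSubmodule ℝ L L) :
          Submodule ℝ L) := by
      refine iSup_le fun x m hm => ?_
      rw [LieSubmodule.mem_toSubmodule, LieModule.mem_posFittingCompOf] at hm
      obtain ⟨n, hn⟩ := hm 2
      rw [pow_succ, pow_one, Module.End.mul_apply, LieModule.toEnd_apply_apply,
        LieModule.toEnd_apply_apply] at hn
      simp only [LieSubalgebra.coe_bracket_of_module] at hn
      show m ∈ ⁅(⊤ : LieIdeal ℝ L), LieAlgebra.derivedSeries ℝ L 1⁆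
      rw [← hn]
      exact LieSubmodule.lie_mem_lie (LieSubmodule.mem_top _) (hab _ _)
    exact hsup hm'
  have hstep : ∀ k, LieModule.lowerCentralSeries ℝ L L (k + 1)
      = LieAlgebra.derivedSeries ℝ L 1 := by
    intro k
    induction k with
    | zero => rfl
    | succ k ih =>
      rw [LieModule.lowerCentralSeries_succ, ih]
      exact le_antisymm (LieSubmodule.lie_le_right _ _) hkey
  have hinf : (⨅ k, LieModule.lowerCentralSeries ℝ L L k) = LieAlgebra.derivedSeries ℝ L 1 := by
    refine le_antisymm ((iInf_le _ 1).trans (hstep 0).le) (le_iInf fun k => ?_)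
    cases k with
    | zero => exact le_top
    | succ k => exact (hstep k).ge
  refine ⟨hinf, fun H hH => ?_⟩
  obtain ⟨hF, hC, hdec⟩ := aux8 L hcenter hmeta H hH
  refine ⟨fun x hx y hy => hC _ (H.lie_mem hx hy) (hab x y), fun x hx hxH => ?_, fun x => ?_⟩
  · rw [hinf] at hx
    exact hC x hxH hx
  · obtain ⟨y, hy, z, hz, hxyz⟩ := hdec x
    exact ⟨y, by rw [hinf]; exact hy, z, hz, hxyz⟩
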